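/- For any prime power q, there exists a (q+2)-partite (q+2)-uniform intersecting hypergraph H with cover number τ(H) = q+1 (i.e., an intersecting (q+2)-Ryser hypergraph). -/

import Mathlib

open Finset

noncomputable section
open scoped Classical

/-- A set of vertices `C` covers the hypergraph `H` if it meets every edge. -/
def IsCover {V : Type*} (C : Set V) (H : Set (Finset V)) : Prop :=
  ∀ e ∈ H, ∃ v ∈ C, v ∈ e

/-- The cover number `τ(H)`: the minimum cardinality of a cover of `H`. -/
noncomputable def coverNumber {V : Type*} (H : Set (Finset V)) : ℕ :=
  sInf {n | ∃ C : Finset V, IsCover (↑C) H ∧ C.card = n}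

/-- The matching number `ν(H)`: the maximum size of a set of pairwise disjoint edges. -/
noncomputable def matchingNumber {V : Type*} (H : Set (Finset V)) : ℕ :=
  sSup {n | ∃ M : Finset (Finset V), ↑M ⊆ H ∧
    (M : Set (Finset V)).Pairwise (fun e₁ e₂ => Disjoint e₁ e₂) ∧ M.card = n}

/-- A hypergraph is intersecting if any two edges share a vertex. -/
def Intersecting {V : Type*} (H : Set (Finset V)) : Prop :=
  ∀ e₁ ∈ H, ∀ e₂ ∈ H, ∃ v, v ∈ e₁ ∧ v ∈ e₂

/-- A hypergraph is `r`-uniform if every edge has exactly `r` vertices. -/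
def Uniform {V : Type*} (H : Set (Finset V)) (r : ℕ) : Prop :=
  ∀ e ∈ H, e.card = r

/-- `H` is `r`-partite with the given sides: the sides partition the vertex set and
every edge has at most one vertex in each side. -/
def Partite {V : Type*} {r : ℕ} (H : Set (Finset V)) (sides : Fin r → Set V) : Prop :=
  (∀ v : V, ∃! i, v ∈ sides i) ∧
  ∀ e ∈ H, ∀ i : Fin r, ∀ x ∈ e, ∀ y ∈ e, x ∈ sides i → y ∈ sides i → x = y

/-- Two hypergraphs are isomorphic if a bijection of the vertex sets carries the
edge set of one onto the edge set of the other. -/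
def Isomorphic {V W : Type*} (H₁ : Set (Finset V)) (H₂ : Set (Finset W)) : Prop :=
  ∃ φ : V ≃ W, ∀ e : Finset V, e ∈ H₁ ↔ e.image φ ∈ H₂

/-- The edge `Ê = E ∪ {v_i}`, where the new vertex `v_i` is encoded as `Sum.inr i`. -/
def hatE {V : Type*} {r : ℕ} (E : Finset V) (i : Fin r) : Finset (V ⊕ Fin r) :=
  insert (Sum.inr i) (E.image Sum.inl)

/-- The construction `H(T, S, F_1, …, F_r)`, with new vertices `v_i = Sum.inr i`. -/
def constructionH {V : Type*} {r : ℕ} (T : Set (Finset V)) (S : Finset V)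
    (s : Fin r → V) (F : Fin r → Finset V) : Set (Finset (V ⊕ Fin r)) :=
  {Eh | ∃ E ∈ T, E ≠ S ∧ ∃ i : Fin r, s i ∈ E ∧ Eh = hatE E i} ∪
  {Eh | ∃ i : Fin r, Eh = (F i).image Sum.inl} ∪
  {Eh | ∃ i : Fin r, Eh = hatE ((F i).erase (s i)) i}

/-- The hypergraph `S(T, S, F_1, …, F_r) = E2 ∪ E3`. -/
def constructionS {V : Type*} {r : ℕ}
    (s : Fin r → V) (F : Fin r → Finset V) : Set (Finset (V ⊕ Fin r)) :=
  {Eh | ∃ i : Fin r, Eh = (F i).image Sum.inl} ∪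
  {Eh | ∃ i : Fin r, Eh = hatE ((F i).erase (s i)) i}

/-- The sides of the construction: the old sides (lifted), plus the new side `{v_1, …, v_r}`. -/
def extSides {V : Type*} {r : ℕ} (sides : Fin r → Set V) : Fin (r + 1) → Set (V ⊕ Fin r) :=
  Fin.lastCases (Set.range Sum.inr) (fun i => Sum.inl '' sides i)

open Configuration

/-- The points of the line `ℓ` other than `w`, as a finset of the vertex type `{p // p ≠ w}`. -/
noncomputable def linePoints {P L : Type*} [Membership P L] [Fintype P] (w : P) (ℓ : L) :
    Finset {p : P // p ≠ w} :=
  Finset.univ.filter (fun p : {p : P // p ≠ w} => (p : P) ∈ ℓ)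

/-- The truncated projective plane at the point `w`: the edges are the point sets of
the lines not passing through `w`, on the vertex set of points other than `w`. -/
noncomputable def truncatedPP (P : Type*) (L : Type*) [Membership P L] [Fintype P] (w : P) :
    Set (Finset {p : P // p ≠ w}) :=
  {E | ∃ ℓ : L, w ∉ ℓ ∧ E = linePoints w ℓ}

/-- The sides of the truncated projective plane, given an enumeration `m` of
the lines through `w`. -/
def ppSide {P L : Type*} [Membership P L] {r : ℕ} (w : P) (m : Fin r → L) (i : Fin r) :
    Set {p : P // p ≠ w} :=
  {p : {p : P // p ≠ w} | (p : P) ∈ m i}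

/-- `m` enumerates the lines through `w`. -/
def EnumeratesLinesThrough {P L : Type*} [Membership P L] {r : ℕ} (w : P) (m : Fin r → L) : Prop :=
  Function.Injective m ∧ (∀ i, w ∈ m i) ∧ ∀ ℓ : L, w ∈ ℓ → ∃ i, m i = ℓ

inductive Vtx (K : Type) : Type
  | aff : K → K → Vtx K
  | slope : K → Vtx K
  | dum : Option K → Vtx K
  | vnew : Option K → Vtx K
deriving DecidableEq

namespace Vtx
variable {K : Type} [Field K] [Fintype K] [DecidableEq K]

def lidx (m b : K) : Option K := if m = 0 then none else some (-b / m)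

def sPt : Option K → Vtx K
  | some c => .aff c 0
  | none => .slope 0

def L0 (K : Type) [Field K] [Fintype K] [DecidableEq K] : Finset (Vtx K) :=
  (univ.image fun x : K => Vtx.aff x 0) ∪ {Vtx.slope 0}

def Ledge (m b : K) : Finset (Vtx K) :=
  (univ.image fun x : K => Vtx.aff x (m * x + b)) ∪ {Vtx.slope m, Vtx.vnew (lidx m b)}

def Gedge (i : Option K) : Finset (Vtx K) :=
  ((L0 K).erase (sPt i)) ∪ {Vtx.dum i, Vtx.vnew i}

def Hyp (K : Type) [Field K] [Fintype K] [DecidableEq K] : Set (Finset (Vtx K)) :=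
  {e | (∃ m b : K, ¬(m = 0 ∧ b = 0) ∧ e = Ledge m b) ∨ (∃ i, e = Gedge i)}

lemma mem_L0 {v : Vtx K} : v ∈ L0 K ↔ (∃ x, Vtx.aff x 0 = v) ∨ v = Vtx.slope 0 := by
  simp [L0]; tauto

lemma mem_Ledge {v : Vtx K} {m b : K} :
    v ∈ Ledge m b ↔ (∃ x, Vtx.aff x (m * x + b) = v) ∨ v = Vtx.slope m ∨
      v = Vtx.vnew (lidx m b) := by
  simp [Ledge]; tauto

lemma mem_Gedge {v : Vtx K} {i : Option K} :
    v ∈ Gedge i ↔ (v ≠ sPt i ∧ v ∈ L0 K) ∨ v = Vtx.dum i ∨ v = Vtx.vnew i := by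
  simp [Gedge, mem_erase]; tauto

lemma sPt_mem_L0 (i : Option K) : sPt i ∈ L0 K := by
  cases i <;> simp [mem_L0, sPt]

lemma card_L0 : (L0 K).card = Fintype.card K + 1 := by
  rw [L0, card_union_of_disjoint, card_image_of_injective, card_univ, card_singleton]
  · intro x y h; cases h; rfl
  · simp

lemma card_Ledge (m b : K) : (Ledge m b).card = Fintype.card K + 2 := by
  rw [Ledge, card_union_of_disjoint, card_image_of_injective, card_univ]
  · rw [card_pair]; simp
  · intro x y h; cases h; rfl
  · simp

lemma card_Gedge (i : Option K) : (Gedge i).card = Fintype.card K + 2 := by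
  rw [Gedge, card_union_of_disjoint, card_erase_of_mem (sPt_mem_L0 i), card_L0, card_pair] <;>
    [skip; simp; skip]
  · simp
  · rw [disjoint_left]
    rintro a ha h
    simp only [mem_insert, mem_singleton] at h
    rcases h with h | h <;> subst h <;>
      revert ha <;> simp [mem_erase, mem_L0]

def idx : Vtx K → Option (Option K)
  | aff x _ => some (some x)
  | slope _ => some none
  | dum i => some i
  | vnew _ => none

lemma idx_inj {e : Finset (Vtx K)} (he : e ∈ Hyp K) :
    ∀ x ∈ e, ∀ y ∈ e, idx x = idx y → x = y := by
  intro x hx y hy hxy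
  rcases he with ⟨m, b, -, rfl⟩ | ⟨i, rfl⟩
  · rw [mem_Ledge] at hx hy
    rcases hx with ⟨x1, rfl⟩ | rfl | rfl <;> rcases hy with ⟨y1, rfl⟩ | rfl | rfl <;>
      simp_all [idx]
  · rw [mem_Gedge] at hx hy
    rcases hx with ⟨hxs, hxL⟩ | rfl | rfl <;> rcases hy with ⟨hys, hyL⟩ | rfl | rfl
    · rw [mem_L0] at hxL hyL
      rcases hxL with ⟨x1, rfl⟩ | rfl <;> rcases hyL with ⟨y1, rfl⟩ | rfl <;> simp_all [idx]
    · rw [mem_L0] at hxL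
      rcases hxL with ⟨x1, rfl⟩ | rfl
      · obtain rfl : i = some x1 := by simpa [idx] using hxy.symm
        simp [sPt] at hxs
      · obtain rfl : i = none := by simpa [idx] using hxy.symm
        simp [sPt] at hxs
    · rw [mem_L0] at hxL
      rcases hxL with ⟨x1, rfl⟩ | rfl <;> simp_all [idx]
    · rw [mem_L0] at hyL
      rcases hyL with ⟨y1, rfl⟩ | rfl
      · obtain rfl : i = some y1 := by simpa [idx] using hxy
        simp [sPt] at hys
      · obtain rfl : i = none := by simpa [idx] using hxy
        simp [sPt] at hys
    · rfl
    · simp_all [idx]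
    · rw [mem_L0] at hyL
      rcases hyL with ⟨y1, rfl⟩ | rfl <;> simp_all [idx]
    · simp_all [idx]
    · rfl

lemma aff_mem_Ledge (x : K) {m b y : K} (hy : y = m * x + b) : Vtx.aff x y ∈ Ledge m b := by
  subst hy; exact mem_Ledge.2 (Or.inl ⟨x, rfl⟩)

lemma slope_mem_Ledge (m b : K) : Vtx.slope m ∈ Ledge m b := mem_Ledge.2 (Or.inr (Or.inl rfl))

lemma vnew_mem_Ledge (m b : K) : Vtx.vnew (lidx m b) ∈ Ledge m b :=
  mem_Ledge.2 (Or.inr (Or.inr rfl))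

lemma vnew_mem_Gedge (i : Option K) : Vtx.vnew i ∈ Gedge i := mem_Gedge.2 (Or.inr (Or.inr rfl))

lemma dum_mem_Gedge (i : Option K) : Vtx.dum i ∈ Gedge i := mem_Gedge.2 (Or.inr (Or.inl rfl))

lemma Ledge_mem_Hyp {m b : K} (h : ¬(m = 0 ∧ b = 0)) : Ledge m b ∈ Hyp K :=
  Or.inl ⟨m, b, h, rfl⟩

lemma Gedge_mem_Hyp (i : Option K) : Gedge i ∈ Hyp K := Or.inr ⟨i, rfl⟩

/-- common vertex of a line edge and a G edge -/
lemma LG_inter {m b : K} (hmb : ¬(m = 0 ∧ b = 0)) (i : Option K) :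
    ∃ v, v ∈ Ledge m b ∧ v ∈ Gedge i := by
  by_cases h : lidx m b = i
  · exact ⟨Vtx.vnew i, h ▸ vnew_mem_Ledge m b, vnew_mem_Gedge i⟩
  · by_cases hm : m = 0
    · subst hm
      rcases i with _ | c
      · exact absurd (by simp [lidx]) h
      · refine ⟨Vtx.slope 0, slope_mem_Ledge 0 b, mem_Gedge.2 (Or.inl ⟨by simp [sPt], ?_⟩)⟩
        exact mem_L0.2 (Or.inr rfl)
    · refine ⟨Vtx.aff (-b / m) 0, aff_mem_Ledge _ (by field_simp; ring), ?_⟩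
      refine mem_Gedge.2 (Or.inl ⟨?_, mem_L0.2 (Or.inl ⟨_, rfl⟩)⟩)
      rcases i with _ | c
      · simp [sPt]
      · simp only [sPt, ne_eq, Vtx.aff.injEq, not_and]
        intro hx
        exact absurd (by simp [lidx, hm, hx]) h

lemma intersecting : Intersecting (Hyp K) := by
  rintro e1 (⟨m, b, hmb, rfl⟩ | ⟨i, rfl⟩) e2 (⟨m', b', hmb', rfl⟩ | ⟨j, rfl⟩)
  · by_cases hmm : m = m'
    · subst hmm
      exact ⟨Vtx.slope m, slope_mem_Ledge m b, slope_mem_Ledge m b'⟩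
    · refine ⟨Vtx.aff ((b' - b) / (m - m')) (m * ((b' - b) / (m - m')) + b),
        aff_mem_Ledge _ rfl, aff_mem_Ledge _ ?_⟩
      have hne : m - m' ≠ 0 := sub_ne_zero.mpr hmm
      field_simp
      ring
  · exact LG_inter hmb j
  · obtain ⟨v, hv1, hv2⟩ := LG_inter hmb' i
    exact ⟨v, hv2, hv1⟩
  · by_cases hij : i = j
    · exact ⟨Vtx.vnew i, vnew_mem_Gedge i, hij ▸ vnew_mem_Gedge i⟩
    · have hslope : ∀ c : K, Vtx.slope 0 ∈ Gedge (K := K) (some c) := fun c =>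
        mem_Gedge.2 (Or.inl ⟨by simp [sPt], mem_L0.2 (Or.inr rfl)⟩)
      have haff : ∀ (c x : K), x ≠ c → Vtx.aff x 0 ∈ Gedge (K := K) (some c) := fun c x hx =>
        mem_Gedge.2 (Or.inl ⟨by simp [sPt, hx], mem_L0.2 (Or.inl ⟨_, rfl⟩)⟩)
      have haffn : ∀ x : K, Vtx.aff x 0 ∈ Gedge (K := K) none := fun x =>
        mem_Gedge.2 (Or.inl ⟨by simp [sPt], mem_L0.2 (Or.inl ⟨_, rfl⟩)⟩)
      rcases i with _ | c <;> rcases j with _ | c'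
      · exact absurd rfl hij
      · obtain ⟨x, hx⟩ := exists_ne c'
        exact ⟨Vtx.aff x 0, haffn x, haff c' x hx⟩
      · obtain ⟨x, hx⟩ := exists_ne c
        exact ⟨Vtx.aff x 0, haff c x hx, haffn x⟩
      · exact ⟨Vtx.slope 0, hslope c, hslope c'⟩

lemma sPt_inj : Function.Injective (sPt (K := K)) := by
  rintro (_ | c) (_ | c') h <;> simp_all [sPt]

lemma mem_L0_eq_sPt {v : Vtx K} (hv : v ∈ L0 K) : ∃ j, v = sPt j := by
  rcases mem_L0.1 hv with ⟨x, rfl⟩ | rfl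
  · exact ⟨some x, rfl⟩
  · exact ⟨none, rfl⟩

lemma vnew_not_mem_L0 (j : Option K) : Vtx.vnew j ∉ L0 K := by
  intro h; rcases mem_L0.1 h with ⟨x, hx⟩ | hx <;> simp_all

lemma dum_not_mem_L0 (j : Option K) : Vtx.dum j ∉ L0 K := by
  intro h; rcases mem_L0.1 h with ⟨x, hx⟩ | hx <;> simp_all

lemma lidx_zero (b : K) : lidx 0 b = none := by simp [lidx]

lemma lidx_neg_mul {t : K} (c : K) (ht : t ≠ 0) : lidx t (-(t * c)) = some c := by
  simp only [lidx, if_neg ht, Option.some.injEq]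
  field_simp

/-- The pencil of line edges through `sPt i₀` (other than the base line `L0`). -/
def pedge (i₀ : Option K) (t : {t : K // t ≠ 0}) : Finset (Vtx K) :=
  match i₀ with
  | some c => Ledge (t : K) (-((t : K) * c))
  | none => Ledge 0 (t : K)

/-- The pencil at `i₀`: the `q - 1` line edges through `sPt i₀` together with `Gedge i₀`. -/
def ped (i₀ : Option K) : Option {t : K // t ≠ 0} → Finset (Vtx K)
  | none => Gedge i₀
  | some t => pedge i₀ t

lemma pedge_mem_Hyp (i₀ : Option K) (t : {t : K // t ≠ 0}) : pedge i₀ t ∈ Hyp K := by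
  rcases i₀ with _ | c
  · exact Ledge_mem_Hyp (fun h => t.2 h.2)
  · exact Ledge_mem_Hyp (fun h => t.2 h.1)

lemma ped_mem_Hyp (i₀ : Option K) (a : Option {t : K // t ≠ 0}) : ped i₀ a ∈ Hyp K := by
  rcases a with _ | t
  · exact Gedge_mem_Hyp i₀
  · exact pedge_mem_Hyp i₀ t

lemma vnew_mem_pedge (i₀ : Option K) (t : {t : K // t ≠ 0}) : Vtx.vnew i₀ ∈ pedge i₀ t := by
  rcases i₀ with _ | c
  · show Vtx.vnew none ∈ Ledge 0 (t : K)
    rw [← lidx_zero (t : K)]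
    exact vnew_mem_Ledge _ _
  · show Vtx.vnew (some c) ∈ Ledge (t : K) (-((t : K) * c))
    rw [← lidx_neg_mul c t.2]
    exact vnew_mem_Ledge _ _

lemma pedge_pairwise {i₀ : Option K} {t t' : {t : K // t ≠ 0}} (htt : t ≠ t') {v : Vtx K}
    (h1 : v ∈ pedge i₀ t) (h2 : v ∈ pedge i₀ t') : v = sPt i₀ ∨ v = Vtx.vnew i₀ := by
  have htv : (t : K) ≠ (t' : K) := fun h => htt (Subtype.ext h)
  rcases i₀ with _ | c
  · replace h1 : v ∈ Ledge 0 (t : K) := h1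
    replace h2 : v ∈ Ledge 0 (t' : K) := h2
    rcases mem_Ledge.1 h1 with ⟨x, rfl⟩ | rfl | rfl <;>
      rcases mem_Ledge.1 h2 with ⟨x', hx'⟩ | h' | h'
    · rw [Vtx.aff.injEq] at hx'
      obtain ⟨rfl, hy⟩ := hx'
      exact absurd (show (t' : K) = t by simpa using hy).symm htv
    · simp at h'
    · rw [lidx_zero] at h'; simp at h'
    · simp at hx'
    · exact Or.inl (by simp [sPt])
    · rw [lidx_zero] at h'; simp at h'
    · simp at hx'
    · rw [lidx_zero] at h'; simp at h'
    · rw [lidx_zero]; exact Or.inr rfl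
  · replace h1 : v ∈ Ledge (t : K) (-((t : K) * c)) := h1
    replace h2 : v ∈ Ledge (t' : K) (-((t' : K) * c)) := h2
    rcases mem_Ledge.1 h1 with ⟨x, rfl⟩ | rfl | rfl <;>
      rcases mem_Ledge.1 h2 with ⟨x', hx'⟩ | h' | h'
    · rw [Vtx.aff.injEq] at hx'
      obtain ⟨rfl, hy⟩ := hx'
      have hz : ((t : K) - (t' : K)) * (x' - c) = 0 := by linear_combination -hy
      rcases mul_eq_zero.1 hz with h | h
      · exact absurd (sub_eq_zero.1 h) htv
      · obtain rfl := sub_eq_zero.1 h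
        exact Or.inl (by simp [sPt])
    · simp at h'
    · rw [lidx_neg_mul c t'.2] at h'; simp at h'
    · simp at hx'
    · rw [Vtx.slope.injEq] at h'
      exact absurd h' htv
    · rw [lidx_neg_mul c t'.2] at h'; simp at h'
    · rw [lidx_neg_mul c t.2] at hx'; simp at hx'
    · rw [lidx_neg_mul c t.2] at h'; simp at h'
    · rw [lidx_neg_mul c t.2]; exact Or.inr rfl

lemma pedge_Gedge {i₀ : Option K} {t : {t : K // t ≠ 0}} {v : Vtx K}
    (h1 : v ∈ pedge i₀ t) (h2 : v ∈ Gedge i₀) : v = sPt i₀ ∨ v = Vtx.vnew i₀ := by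
  rcases mem_Gedge.1 h2 with ⟨hne, hL0⟩ | rfl | rfl
  · exfalso
    rcases i₀ with _ | c
    · replace h1 : v ∈ Ledge 0 (t : K) := h1
      rcases mem_L0.1 hL0 with ⟨x, rfl⟩ | rfl
      · rcases mem_Ledge.1 h1 with ⟨x', hx'⟩ | h' | h'
        · rw [Vtx.aff.injEq] at hx'
          obtain ⟨rfl, hy⟩ := hx'
          exact t.2 (by simpa using hy)
        · simp at h'
        · rw [lidx_zero] at h'; simp at h'
      · exact hne (by simp [sPt])
    · replace h1 : v ∈ Ledge (t : K) (-((t : K) * c)) := h1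
      rcases mem_L0.1 hL0 with ⟨x, rfl⟩ | rfl
      · rcases mem_Ledge.1 h1 with ⟨x', hx'⟩ | h' | h'
        · rw [Vtx.aff.injEq] at hx'
          obtain ⟨rfl, hy⟩ := hx'
          have : (t : K) * (x' - c) = 0 := by linear_combination hy
          rcases mul_eq_zero.1 this with h | h
          · exact t.2 h
          · obtain rfl := sub_eq_zero.1 h
            exact hne (by simp [sPt])
        · simp at h'
        · rw [lidx_neg_mul c t.2] at h'; simp at h'
      · rcases mem_Ledge.1 h1 with ⟨x', hx'⟩ | h' | h'
        · simp at hx'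
        · rw [Vtx.slope.injEq] at h'
          exact t.2 h'.symm
        · rw [lidx_neg_mul c t.2] at h'; simp at h'
  · exfalso
    rcases i₀ with _ | c <;>
    · replace h1 : Vtx.dum _ ∈ Ledge _ _ := h1
      rcases mem_Ledge.1 h1 with ⟨x', hx'⟩ | h' | h' <;> simp_all
  · exact Or.inr rfl

lemma ped_pairwise {i₀ : Option K} {a a' : Option {t : K // t ≠ 0}} (haa : a ≠ a') {v : Vtx K}
    (h1 : v ∈ ped i₀ a) (h2 : v ∈ ped i₀ a') : v = sPt i₀ ∨ v = Vtx.vnew i₀ := by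
  rcases a with _ | t <;> rcases a' with _ | t'
  · exact absurd rfl haa
  · exact pedge_Gedge h2 h1
  · exact pedge_Gedge h1 h2
  · exact pedge_pairwise (fun h => haa (by rw [h])) h1 h2

lemma vnew_mem_ped {i₀ j : Option K} {a : Option {t : K // t ≠ 0}}
    (h : Vtx.vnew j ∈ ped i₀ a) : j = i₀ := by
  rcases a with _ | t
  · rcases mem_Gedge.1 h with ⟨-, hL0⟩ | h' | h'
    · exact absurd hL0 (vnew_not_mem_L0 j)
    · simp at h'
    · simpa using h'
  · rcases i₀ with _ | c
    · replace h : Vtx.vnew j ∈ Ledge 0 (t : K) := h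
      rcases mem_Ledge.1 h with ⟨x', hx'⟩ | h' | h'
      · simp at hx'
      · simp at h'
      · rw [lidx_zero] at h'; simpa using h'
    · replace h : Vtx.vnew j ∈ Ledge (t : K) (-((t : K) * c)) := h
      rcases mem_Ledge.1 h with ⟨x', hx'⟩ | h' | h'
      · simp at hx'
      · simp at h'
      · rw [lidx_neg_mul c t.2] at h'; simpa using h'

lemma dum_mem_ped {i₀ j : Option K} {a : Option {t : K // t ≠ 0}}
    (h : Vtx.dum j ∈ ped i₀ a) : j = i₀ := by
  rcases a with _ | t
  · rcases mem_Gedge.1 h with ⟨-, hL0⟩ | h' | h'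
    · exact absurd hL0 (dum_not_mem_L0 j)
    · simpa using h'
    · simp at h'
  · rcases i₀ with _ | c <;>
    · replace h : Vtx.dum j ∈ Ledge _ _ := h
      rcases mem_Ledge.1 h with ⟨x', hx'⟩ | h' | h' <;> simp_all

lemma card_option_units : Fintype.card (Option {t : K // t ≠ 0}) = Fintype.card K := by
  rw [Fintype.card_option]
  have h1 : Fintype.card {t : K // t ≠ 0} = Fintype.card K - 1 := by
    have := Fintype.card_subtype_compl (fun x : K => x = 0)
    simpa [Fintype.card_subtype_eq] using this
  have h2 : 1 ≤ Fintype.card K := Fintype.card_pos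
  omega

lemma triple_inj {i j : Option K} {v : Vtx K}
    (hi : v = sPt i ∨ v = Vtx.dum i ∨ v = Vtx.vnew i)
    (hj : v = sPt j ∨ v = Vtx.dum j ∨ v = Vtx.vnew j) : i = j := by
  rcases hi with rfl | rfl | rfl <;> rcases hj with h | h | h
  · exact sPt_inj h
  · rcases i with _ | c <;> simp [sPt] at h
  · rcases i with _ | c <;> simp [sPt] at h
  · rcases j with _ | c <;> simp [sPt] at h
  · simpa using h
  · simp at h
  · rcases j with _ | c <;> simp [sPt] at h
  · simp at h
  · simpa using h

lemma cover_lower (C : Finset (Vtx K)) (hC : IsCover (↑C) (Hyp K)) :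
    Fintype.card K + 1 ≤ C.card := by
  by_contra hlt
  push_neg at hlt
  have hCq : C.card ≤ Fintype.card K := by omega
  have hex : ∃ i₀ : Option K, sPt i₀ ∉ C ∧ Vtx.dum i₀ ∉ C ∧ Vtx.vnew i₀ ∉ C := by
    by_contra hall
    push_neg at hall
    set g : Option K → Vtx K := fun i =>
      if sPt i ∈ C then sPt i else if Vtx.dum i ∈ C then Vtx.dum i else Vtx.vnew i with hg
    have hgC : ∀ i, g i ∈ C := by
      intro i
      simp only [hg]
      split_ifs with p1 p2
      · exact p1
      · exact p2
      · exact hall i p1 p2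
    have hgT : ∀ i, g i = sPt i ∨ g i = Vtx.dum i ∨ g i = Vtx.vnew i := by
      intro i
      simp only [hg]
      split_ifs <;> simp
    have hinj : Function.Injective g := fun i j h => triple_inj (hgT i) (h ▸ hgT j)
    have hle := Finset.card_le_card_of_injOn (s := (univ : Finset (Option K))) (t := C) g
      (fun a _ => hgC a) hinj.injOn
    rw [card_univ, Fintype.card_option] at hle
    omega
  obtain ⟨i₀, hs₀, hd₀, hv₀⟩ := hex
  have hch : ∀ a : Option {t : K // t ≠ 0}, ∃ v, v ∈ C ∧ v ∈ ped i₀ a := by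
    intro a
    obtain ⟨v, hv1, hv2⟩ := hC (ped i₀ a) (ped_mem_Hyp i₀ a)
    exact ⟨v, hv1, hv2⟩
  choose κ hκC hκP using hch
  have hκinj : Function.Injective κ := by
    intro a a' h
    by_contra hne
    rcases ped_pairwise hne (hκP a) (h ▸ hκP a') with h1 | h1
    · exact hs₀ (h1 ▸ hκC a)
    · exact hv₀ (h1 ▸ hκC a)
  have hcard1 : Fintype.card K ≤ C.card := by
    have := Finset.card_le_card_of_injOn (s := (univ : Finset (Option {t : K // t ≠ 0})))
      (t := C) κ (fun a _ => hκC a) hκinj.injOn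
    rwa [card_univ, card_option_units] at this
  have hCeq : C.card = Fintype.card K := le_antisymm hCq hcard1
  have himg : Finset.image κ univ = C := by
    apply Finset.eq_of_subset_of_card_le
    · intro v hv
      obtain ⟨a, -, rfl⟩ := Finset.mem_image.1 hv
      exact hκC a
    · rw [hCeq, Finset.card_image_of_injective _ hκinj, card_univ, card_option_units]
  have hnov : ∀ j, Vtx.vnew j ∉ C := by
    intro j hj
    obtain ⟨a, -, ha⟩ := Finset.mem_image.1 (himg ▸ hj)
    have h2 := vnew_mem_ped (ha ▸ hκP a)
    exact hv₀ (h2 ▸ hj)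
  have hnod : ∀ j, Vtx.dum j ∉ C := by
    intro j hj
    obtain ⟨a, -, ha⟩ := Finset.mem_image.1 (himg ▸ hj)
    have h2 := dum_mem_ped (ha ▸ hκP a)
    exact hd₀ (h2 ▸ hj)
  have huniq : ∀ v ∈ C, v ∈ L0 K → v = κ none := by
    intro v hvC hvL
    obtain ⟨a, -, ha⟩ := Finset.mem_image.1 (himg ▸ hvC)
    rcases a with _ | t
    · exact ha.symm
    · exfalso
      have hvG : v ∈ Gedge i₀ := mem_Gedge.2 (Or.inl ⟨fun h => hs₀ (h ▸ hvC), hvL⟩)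
      rcases pedge_Gedge (ha ▸ hκP (some t)) hvG with h1 | h1
      · exact hs₀ (h1 ▸ hvC)
      · exact hv₀ (h1 ▸ hvC)
  have hkn : κ none ∈ Gedge i₀ := hκP none
  rcases mem_Gedge.1 hkn with ⟨hne0, hL0⟩ | h | h
  · obtain ⟨j₀, hj₀⟩ := mem_L0_eq_sPt hL0
    obtain ⟨v, hv1, hv2⟩ := hC (Gedge j₀) (Gedge_mem_Hyp j₀)
    have hv1' : v ∈ C := hv1
    rcases mem_Gedge.1 hv2 with ⟨hvne, hvL⟩ | rfl | rfl
    · exact hvne ((huniq v hv1' hvL).trans hj₀)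
    · exact hnod j₀ hv1'
    · exact hnov j₀ hv1'
  · exact hd₀ (h ▸ hκC none)
  · exact hv₀ (h ▸ hκC none)

lemma cover_upper : IsCover (↑(univ.image (Vtx.vnew (K := K)) : Finset (Vtx K))) (Hyp K) := by
  rintro e (⟨m, b, -, rfl⟩ | ⟨i, rfl⟩)
  · exact ⟨Vtx.vnew (lidx m b), by simp, vnew_mem_Ledge m b⟩
  · exact ⟨Vtx.vnew i, by simp, vnew_mem_Gedge i⟩

lemma coverNumber_Hyp : coverNumber (Hyp K) = Fintype.card K + 1 := by
  have hvinj : Function.Injective (Vtx.vnew (K := K)) := fun a b h => by injection h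
  have hmem : Fintype.card K + 1 ∈
      {n | ∃ C : Finset (Vtx K), IsCover (↑C) (Hyp K) ∧ C.card = n} :=
    ⟨univ.image Vtx.vnew, cover_upper, by
      rw [Finset.card_image_of_injective _ hvinj, card_univ, Fintype.card_option]⟩
  refine le_antisymm (Nat.sInf_le hmem) (le_csInf ⟨_, hmem⟩ ?_)
  rintro n ⟨C, hC, rfl⟩
  exact cover_lower C hC

lemma uniform_Hyp : Uniform (Hyp K) (Fintype.card K + 2) := by
  rintro e (⟨m, b, -, rfl⟩ | ⟨i, rfl⟩)
  · exact card_Ledge m b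
  · exact card_Gedge i

theorem main (K : Type) [Field K] [Fintype K] [DecidableEq K] :
    ∃ sides : Fin (Fintype.card K + 2) → Set (Vtx K),
      Partite (Hyp K) sides ∧ Uniform (Hyp K) (Fintype.card K + 2) ∧
      Intersecting (Hyp K) ∧ coverNumber (Hyp K) = Fintype.card K + 1 := by
  have hcard : Fintype.card (Option (Option K)) = Fintype.card K + 2 := by
    simp [Fintype.card_option]
  set e2 : Fin (Fintype.card K + 2) ≃ Option (Option K) :=
    (Fintype.equivFinOfCardEq hcard).symm with he2
  refine ⟨fun j => {v | idx v = e2 j}, ⟨?_, ?_⟩, uniform_Hyp, intersecting, coverNumber_Hyp⟩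
  · intro v
    refine ⟨e2.symm (idx v), by simp, ?_⟩
    intro j hj
    have h : idx v = e2 j := hj
    rw [h, Equiv.symm_apply_apply]
  · intro e he i x hx y hy hxi hyi
    have h1 : idx x = e2 i := hxi
    have h2 : idx y = e2 i := hyi
    exact idx_inj he x hx y hy (h1.trans h2.symm)

end Vtx

theorem statement_1 (q : ℕ) (hq : IsPrimePow q) :
    ∃ (W : Type) (H : Set (Finset W)) (sides : Fin (q + 2) → Set W),
      Partite H sides ∧ Uniform H (q + 2) ∧ Intersecting H ∧ coverNumber H = q + 1 := by
  obtain ⟨p, k, hp, hk, hpk⟩ := hq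
  haveI : Fact p.Prime := ⟨Nat.prime_iff.mpr hp⟩
  haveI : Fintype (GaloisField p k) := Fintype.ofFinite _
  have hcard : Fintype.card (GaloisField p k) = q := by
    have h := GaloisField.card p k hk.ne'
    rw [Nat.card_eq_fintype_card] at h
    rw [h, hpk]
  refine ⟨Vtx (GaloisField p k), Vtx.Hyp (GaloisField p k), ?_⟩
  rw [← hcard]
  exact Vtx.main (GaloisField p k)

end
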